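/- Let 1 ≤ d ≤ n and let L ⊆ Sⁿ be a linear subspace. Suppose there exists S₀ ∈ V(n,d) such that no nonzero Ω ∈ L satisfies ΩS₀ = 0. Then the set F_L = {S ∈ V(n,d) : there exists a nonzero Ω ∈ L with ΩS = 0} is a Zariski-closed proper subset of V(n,d); that is, there is a real polynomial q on Sⁿ, not identically zero on V(n,d), such that F_L ⊆ {S ∈ V(n,d) : q(S) = 0}. -/

import Mathlib

open Matrix

lemma aux_gram {ι κ : Type*} [Fintype ι] [Fintype κ] [DecidableEq ι] (B : Matrix κ ι ℝ) :
    (Bᵀ * B).det ≠ 0 ↔ Function.Injective B.mulVec := by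
  have hker : Function.Injective (Bᵀ * B).mulVec ↔ Function.Injective B.mulVec := by
    rw [show B.mulVec = B.mulVecLin from rfl,
      show (Bᵀ * B).mulVec = (Bᵀ * B).mulVecLin from rfl,
      ← LinearMap.ker_eq_bot, ← LinearMap.ker_eq_bot,
      Matrix.ker_mulVecLin_transpose_mul_self]
  rw [← hker, Matrix.mulVec_injective_iff_isUnit, Matrix.isUnit_iff_isUnit_det,
    isUnit_iff_ne_zero]

theorem stmt11 (n d : ℕ) (hd1 : 1 ≤ d) (hdn : d ≤ n)
    (L : Submodule ℝ (Matrix (Fin n) (Fin n) ℝ)) (hLsymm : ∀ A ∈ L, A.IsSymm)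
    (hexists : ∃ S₀ : Matrix (Fin n) (Fin n) ℝ, S₀.IsSymm ∧ S₀.rank = d ∧
      ∀ Ω ∈ L, Ω * S₀ = 0 → Ω = 0) :
    ∃ q : MvPolynomial (Fin n × Fin n) ℝ,
      (∃ S : Matrix (Fin n) (Fin n) ℝ, S.IsSymm ∧ S.rank = d ∧
        MvPolynomial.eval (fun p => S p.1 p.2) q ≠ 0) ∧
      ∀ S : Matrix (Fin n) (Fin n) ℝ, S.IsSymm → S.rank = d →
        (∃ Ω ∈ L, Ω ≠ 0 ∧ Ω * S = 0) →
        MvPolynomial.eval (fun p => S p.1 p.2) q = 0 := by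
  classical
  obtain ⟨S₀, hS₀symm, hS₀rank, hS₀⟩ := hexists
  set m := Module.finrank ℝ L with hm
  let b : Module.Basis (Fin m) ℝ L := Module.finBasis ℝ L
  let M : Fin m → Matrix (Fin n) (Fin n) ℝ := fun i => (b i : Matrix (Fin n) (Fin n) ℝ)
  let P : Matrix (Fin m) (Fin m) (MvPolynomial (Fin n × Fin n) ℝ) :=
    fun i j => ∑ p : Fin n × Fin n,
      (∑ a, MvPolynomial.C (M i p.1 a) * MvPolynomial.X (a, p.2)) *
      (∑ a, MvPolynomial.C (M j p.1 a) * MvPolynomial.X (a, p.2))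
  let BM : Matrix (Fin n) (Fin n) ℝ → Matrix (Fin n × Fin n) (Fin m) ℝ :=
    fun S => fun p i => (M i * S) p.1 p.2
  have keyeval : ∀ S : Matrix (Fin n) (Fin n) ℝ,
      MvPolynomial.eval (fun p => S p.1 p.2) P.det = ((BM S)ᵀ * BM S).det := by
    intro S
    rw [RingHom.map_det]
    congr 1
    ext i j
    change (MvPolynomial.eval fun p => S p.1 p.2) (P i j) = ((BM S)ᵀ * BM S) i j
    simp only [RingHom.mapMatrix_apply, Matrix.map_apply, Matrix.mul_apply,
      Matrix.transpose_apply, P, BM, map_sum, _root_.map_mul, MvPolynomial.eval_C,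
      MvPolynomial.eval_X]
    exact (Matrix.mul_apply (M := (BM S)ᵀ) (N := BM S)).symm
  have keymulvec : ∀ (S : Matrix (Fin n) (Fin n) ℝ) (c : Fin m → ℝ),
      (BM S).mulVec c = fun p => (((∑ i, c i • b i : L) : Matrix (Fin n) (Fin n) ℝ) * S) p.1 p.2 := by
    intro S c
    funext p
    simp only [Matrix.mulVec, dotProduct, BM, AddSubmonoidClass.coe_finset_sum,
      SetLike.val_smul, Finset.sum_mul, Matrix.smul_mul]
    rw [Matrix.sum_apply]
    refine Finset.sum_congr rfl fun i _ => ?_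
    simp [mul_comm, M]
  refine ⟨P.det, ⟨S₀, hS₀symm, hS₀rank, ?_⟩, ?_⟩
  · rw [keyeval, aux_gram]
    rw [show (BM S₀).mulVec = (BM S₀).mulVecLin from rfl, ← LinearMap.ker_eq_bot,
      LinearMap.ker_eq_bot']
    intro c hc
    rw [Matrix.mulVecLin_apply, keymulvec] at hc
    have hzero : ((∑ i, c i • b i : L) : Matrix (Fin n) (Fin n) ℝ) * S₀ = 0 := by
      ext k l
      exact congrFun hc (k, l)
    have h0 : ((∑ i, c i • b i : L) : Matrix (Fin n) (Fin n) ℝ) = 0 :=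
      hS₀ _ (∑ i, c i • b i : L).2 hzero
    have h1 : (∑ i, c i • b i : L) = 0 := Subtype.ext h0
    funext i
    exact Fintype.linearIndependent_iff.mp b.linearIndependent c h1 i
  · rintro S _ _ ⟨Ω, hΩL, hΩne, hΩS⟩
    rw [keyeval]
    by_contra hdet
    have hinj := (aux_gram (BM S)).mp hdet
    have hrepr : (∑ i, b.repr ⟨Ω, hΩL⟩ i • b i : L) = ⟨Ω, hΩL⟩ := b.sum_repr ⟨Ω, hΩL⟩
    have h2 : (BM S).mulVec (fun i => b.repr ⟨Ω, hΩL⟩ i) = (BM S).mulVec 0 := by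
      rw [keymulvec]
      funext p
      simp only [hrepr, hΩS, Matrix.zero_apply, Matrix.mulVec_zero, Pi.zero_apply]
    have h3 := hinj h2
    apply hΩne
    have : (⟨Ω, hΩL⟩ : L) = 0 := by
      rw [← hrepr]
      simp [funext_iff.mp h3]
    exact congrArg Subtype.val this
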